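/- arXiv:2302.13174 — 3 statements merged into one kernel-verified Lean document; each statement's English description precedes it below -/
import Mathlib

section
/- For every natural number n ≥ 1, the map sending a nonempty proper subset T of Fin (n+1) to the facet F(T) is injective; consequently, the n-permutohedron has exactly 2^{n+1} − 2 facets, one for each nonempty proper subset of {1, 2, ..., n+1}. -/
def permutohedronFacet (n : ℕ) (T : Finset (Fin (n + 1))) : Finset (Equiv.Perm (Fin (n + 1))) :=
  Finset.univ.filter fun σ =>
    T.image σ = Finset.univ.filter fun j : Fin (n + 1) => (j : ℕ) < T.card

lemma card_init (n k : ℕ) (hk : k ≤ n + 1) :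
    (Finset.univ.filter fun j : Fin (n + 1) => (j : ℕ) < k).card = k := by
  have : (Finset.univ.filter fun j : Fin (n + 1) => (j : ℕ) < k)
      = (Finset.univ : Finset (Fin k)).map (Fin.castLEEmb hk) := by
    ext j
    simp only [Finset.mem_filter, Finset.mem_univ, true_and, Finset.mem_map]
    constructor
    · intro hj; exact ⟨⟨j, hj⟩, by simp [Fin.castLEEmb, Fin.ext_iff]⟩
    · rintro ⟨i, -, rfl⟩; simpa [Fin.castLEEmb] using i.2
  simp [this]

lemma facet_nonempty (n : ℕ) (T : Finset (Fin (n + 1))) :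
    ∃ σ, σ ∈ permutohedronFacet n T := by
  have hc : Fintype.card {x : Fin (n+1) // x ∈ T}
      = Fintype.card {x : Fin (n+1) // (x : ℕ) < T.card} := by
    rw [Fintype.card_coe, Fintype.card_subtype]
    exact (card_init n T.card (by simpa using T.card_le_univ)).symm
  obtain e := Fintype.equivOfCardEq hc
  refine ⟨e.extendSubtype, ?_⟩
  simp only [permutohedronFacet, Finset.mem_filter, Finset.mem_univ, true_and]
  apply Finset.eq_of_subset_of_card_le
  · intro x hx
    simp only [Finset.mem_image] at hx
    obtain ⟨y, hy, rfl⟩ := hx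
    simp only [Finset.mem_filter, Finset.mem_univ, true_and]
    exact e.extendSubtype_mem y hy
  · rw [Finset.card_image_of_injective _ e.extendSubtype.injective,
      card_init n T.card (by simpa using T.card_le_univ)]

lemma facet_inj_le (n : ℕ) (T₁ T₂ : Finset (Fin (n + 1))) (h2 : T₂ ≠ Finset.univ)
    (hle : T₁.card ≤ T₂.card)
    (h : permutohedronFacet n T₁ = permutohedronFacet n T₂) : T₁ = T₂ := by
  obtain ⟨σ, hσ1⟩ := facet_nonempty n T₁
  have hσ2 : σ ∈ permutohedronFacet n T₂ := h ▸ hσ1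
  simp only [permutohedronFacet, Finset.mem_filter, Finset.mem_univ, true_and] at hσ1 hσ2
  rcases eq_or_lt_of_le hle with heq | hlt
  · apply Finset.image_injective σ.injective
    rw [hσ1, hσ2, heq]
  · exfalso
    have hc2 : T₂.card ≤ n := by
      have := T₂.card_le_univ
      simp only [Finset.card_univ, Fintype.card_fin] at this
      rcases this.lt_or_eq with h' | h'
      · omega
      · exact absurd (Finset.eq_univ_of_card _ (by simp [h'])) h2
    set a : Fin (n + 1) := ⟨T₁.card, by omega⟩
    set b : Fin (n + 1) := ⟨T₂.card, by omega⟩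
    have hab : a ≠ b := by simp [a, b, Fin.ext_iff]; omega
    set σ' : Equiv.Perm (Fin (n + 1)) := (Equiv.swap a b) * σ
    have h1' : T₁.image σ' = Finset.univ.filter fun j : Fin (n + 1) => (j : ℕ) < T₁.card := by
      have : T₁.image σ' = (T₁.image σ).image (Equiv.swap a b) := by
        rw [Finset.image_image]; rfl
      rw [this, hσ1]
      apply Finset.image_congr (g := id) ?_ |>.trans (Finset.image_id)
      intro x hx
      simp only [Finset.mem_coe, Finset.mem_filter, Finset.mem_univ, true_and] at hx
      apply Equiv.swap_apply_of_ne_of_ne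
      · intro hxa; rw [hxa] at hx; simp [a] at hx
      · intro hxb; rw [hxb] at hx; simp [b] at hx; omega
    have hσ'2 : σ' ∈ permutohedronFacet n T₂ := by
      rw [← h]
      simp only [permutohedronFacet, Finset.mem_filter, Finset.mem_univ, true_and]
      exact h1'
    simp only [permutohedronFacet, Finset.mem_filter, Finset.mem_univ, true_and] at hσ'2
    have hbmem : b ∈ T₂.image σ' := by
      have : T₂.image σ' = (T₂.image σ).image (Equiv.swap a b) := by
        rw [Finset.image_image]; rfl
      rw [this, hσ2]
      refine Finset.mem_image.2 ⟨a, ?_, Equiv.swap_apply_left a b⟩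
      simp [a, hlt]
    rw [hσ'2] at hbmem
    simp [b] at hbmem

/-- For `n ≥ 1`, the map `T ↦ F(T)` is injective on nonempty proper subsets of
`Fin (n+1)`; consequently the `n`-permutohedron has exactly `2^(n+1) - 2` facets, one
for each nonempty proper subset of `{1, …, n+1}`. -/
theorem permutohedronFacet_injective (n : ℕ) (hn : 1 ≤ n) :
    (∀ T₁ T₂ : Finset (Fin (n + 1)), T₁.Nonempty → T₁ ≠ Finset.univ →
      T₂.Nonempty → T₂ ≠ Finset.univ →
      permutohedronFacet n T₁ = permutohedronFacet n T₂ → T₁ = T₂) ∧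
    (Finset.univ.filter fun T : Finset (Fin (n + 1)) => T.Nonempty ∧ T ≠ Finset.univ).card
      = 2 ^ (n + 1) - 2 := by
  constructor
  · intro T₁ T₂ _ h1u _ h2u h
    rcases le_total T₁.card T₂.card with hle | hle
    · exact facet_inj_le n T₁ T₂ h2u hle h
    · exact (facet_inj_le n T₂ T₁ h1u hle h.symm).symm
  · have key : Finset.univ.filter
        (fun T : Finset (Fin (n + 1)) => ¬(T.Nonempty ∧ T ≠ Finset.univ))
        = {∅, Finset.univ} := by
      ext T
      simp only [Finset.mem_filter, Finset.mem_univ, true_and, Finset.mem_insert,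
        Finset.mem_singleton, not_and, not_ne_iff]
      constructor
      · intro hT
        rcases T.eq_empty_or_nonempty with h | h
        · exact Or.inl h
        · exact Or.inr (hT h)
      · rintro (rfl | rfl)
        · intro h; exact absurd rfl h.ne_empty
        · intro _; rfl
    have htot := Finset.card_filter_add_card_filter_not
      (s := (Finset.univ : Finset (Finset (Fin (n + 1)))))
      (p := fun T : Finset (Fin (n + 1)) => T.Nonempty ∧ T ≠ Finset.univ)
    rw [key] at htot
    have hcard2 : ({∅, Finset.univ} : Finset (Finset (Fin (n + 1)))).card = 2 := by
      rw [Finset.card_insert_of_notMem, Finset.card_singleton]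
      simp only [Finset.mem_singleton]
      exact fun h => absurd h.symm (Finset.univ_nonempty).ne_empty
    have huniv : (Finset.univ : Finset (Finset (Fin (n + 1)))).card = 2 ^ (n + 1) := by
      simp [Fintype.card_finset]
    omega
end

section
/- Let n ≥ 3 and let ℓ be a bijection from the prism's vertex set Fin 2 × ZMod n to {1, 2, ..., 2n}. If there exist A and B such that the sum of ℓ over each of the two bases {0} × ZMod n and {1} × ZMod n equals A, and the sum of ℓ over each rectangular face R(i) = {(0, i), (1, i), (0, i+1), (1, i+1)} (for i ∈ ZMod n) equals B, then B = 4n + 2 and n is even. -/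
/-- If a labeling of the vertices `Fin 2 × ZMod n` of the regular `n`-gon prism
(`n ≥ 3`) by `{1, …, 2n}` has sum `A` on each of the two bases and sum `B` on each
rectangular face `R(i) = {(0,i), (1,i), (0,i+1), (1,i+1)}`, then `B = 4n + 2` and `n`
is even. -/
theorem magic_prism_necessary (n : ℕ) [NeZero n] (hn : 3 ≤ n)
    (ℓ : Fin 2 × ZMod n ≃ (Finset.Icc 1 (2 * n) : Finset ℕ)) (A B : ℕ)
    (hA : ∀ b : Fin 2, ∑ i : ZMod n, (ℓ (b, i) : ℕ) = A)
    (hB : ∀ i : ZMod n,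
      ∑ v ∈ ({(0, i), (1, i), (0, i + 1), (1, i + 1)} : Finset (Fin 2 × ZMod n)),
        (ℓ v : ℕ) = B) :
    B = 4 * n + 2 ∧ Even n := by
  haveI : Fact (1 < n) := ⟨by omega⟩
  have hi : ∀ i : ZMod n, i ≠ i + 1 := by
    intro i h
    have h1 : (1 : ZMod n) = 0 := by
      have := (add_comm i 1 ▸ h.symm)
      rwa [add_eq_right] at this
    exact one_ne_zero h1
  -- total sum of labels
  have hT : ∑ v : Fin 2 × ZMod n, (ℓ v : ℕ) = n * (2 * n + 1) := by
    rw [Fintype.sum_equiv ℓ _ (fun x : (Finset.Icc 1 (2 * n) : Finset ℕ) => (x : ℕ))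
      (fun _ => rfl)]
    rw [Finset.sum_coe_sort (Finset.Icc 1 (2 * n)) (fun k => k)]
    have hg := Finset.sum_range_id_mul_two (2 * n + 1)
    have hins : Finset.range (2 * n + 1) = insert 0 (Finset.Icc 1 (2 * n)) := by
      ext k; simp [Nat.lt_succ_iff]; omega
    rw [hins, Finset.sum_insert (by simp), zero_add] at hg
    have e : (2 * n + 1) * (2 * n + 1 - 1) = (n * (2 * n + 1)) * 2 := by
      rw [Nat.add_sub_cancel]; ring
    omega
  have hT2 : ∑ v : Fin 2 × ZMod n, (ℓ v : ℕ)
      = ∑ i : ZMod n, (ℓ (0, i) : ℕ) + ∑ i : ZMod n, (ℓ (1, i) : ℕ) := by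
    rw [Fintype.sum_prod_type, Fin.sum_univ_two]
  -- 2A = total
  have h2A : A + A = n * (2 * n + 1) := by
    have h0 := hA 0
    have h1 := hA 1
    omega
  -- face sums
  have hface : ∀ i : ZMod n,
      (ℓ (0, i) : ℕ) + (ℓ (1, i) : ℕ) + (ℓ (0, i + 1) : ℕ) + (ℓ (1, i + 1) : ℕ) = B := by
    intro i
    have h := hB i
    rw [Finset.sum_insert (by simp [Prod.ext_iff, hi i]),
        Finset.sum_insert (by simp [Prod.ext_iff, hi i]),
        Finset.sum_pair (by simp [Prod.ext_iff])] at h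
    omega
  have hshift : ∀ b : Fin 2,
      ∑ i : ZMod n, (ℓ (b, i + 1) : ℕ) = ∑ i : ZMod n, (ℓ (b, i) : ℕ) := by
    intro b
    exact Fintype.sum_equiv (Equiv.addRight (1 : ZMod n)) _ _ (fun i => rfl)
  have hnB : n * B = 2 * (n * (2 * n + 1)) := by
    have := Finset.sum_congr rfl (fun i (_ : i ∈ Finset.univ) => hface i)
    rw [Finset.sum_const, Finset.card_univ, ZMod.card, smul_eq_mul] at this
    rw [← this]
    rw [Finset.sum_add_distrib, Finset.sum_add_distrib, Finset.sum_add_distrib,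
        hshift 0, hshift 1, ← hT, hT2]
    ring
  have hB' : B = 4 * n + 2 := by
    have hn0 : 0 < n := by omega
    have : n * B = n * (4 * n + 2) := by rw [hnB]; ring
    exact Nat.eq_of_mul_eq_mul_left hn0 this
  refine ⟨hB', ?_⟩
  have heven : Even (n * (2 * n + 1)) := ⟨A, by omega⟩
  rcases Nat.even_mul.mp heven with h | h
  · exact h
  · obtain ⟨k, hk⟩ := h; omega
end

section
/- For every even n ≥ 4 there exists a bijection ℓ from the prism's vertex set Fin 2 × ZMod n to {1, 2, ..., 2n} such that the sum of ℓ over each of the two bases {0} × ZMod n and {1} × ZMod n equals n(2n+1)/2, and the sum of ℓ over each rectangular face R(i) = {(0, i), (1, i), (0, i+1), (1, i+1)} equals 4n + 2. -/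
def Fnat (n b k : ℕ) : ℕ :=
  if k % 2 = 0 then (if b = 0 then 2*n - k else k + 2)
  else (if b = 0 then k else 2*n - k)

lemma sum_zmod (n : ℕ) [NeZero n] (f : ℕ → ℕ) :
    ∑ i : ZMod n, f i.val = ∑ k ∈ Finset.range n, f k := by
  refine Finset.sum_nbij' (i := fun i => ZMod.val i) (j := fun k => (k : ZMod n)) ?_ ?_ ?_ ?_ ?_
  · intro a _; exact Finset.mem_range.mpr (ZMod.val_lt a)
  · intro a _; exact Finset.mem_univ _
  · intro a _; exact ZMod.natCast_zmod_val a
  · intro a ha; exact ZMod.val_natCast_of_lt (Finset.mem_range.mp ha)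
  · intro a _; rfl

lemma sum_two_mul (m : ℕ) (f : ℕ → ℕ) :
    ∑ k ∈ Finset.range (2*m), f k = ∑ j ∈ Finset.range m, (f (2*j) + f (2*j+1)) := by
  induction m with
  | zero => simp
  | succ m ih =>
      rw [show 2*(m+1) = 2*m+1+1 by ring, Finset.sum_range_succ, Finset.sum_range_succ,
        Finset.sum_range_succ, ih]
      omega

/-- For every even `n ≥ 4` there exists a labeling of the vertices `Fin 2 × ZMod n`
of the regular `n`-gon prism by `{1, …, 2n}` whose sum on each of the two bases is
`n(2n+1)/2` and whose sum on each rectangular face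
`R(i) = {(0,i), (1,i), (0,i+1), (1,i+1)}` is `4n + 2`. -/
theorem exists_magic_prism (n : ℕ) [NeZero n] (hn : 4 ≤ n) (heven : Even n) :
    ∃ ℓ : Fin 2 × ZMod n ≃ (Finset.Icc 1 (2 * n) : Finset ℕ),
      (∀ b : Fin 2, ∑ i : ZMod n, (ℓ (b, i) : ℕ) = n * (2 * n + 1) / 2) ∧
      (∀ i : ZMod n,
        ∑ v ∈ ({(0, i), (1, i), (0, i + 1), (1, i + 1)} : Finset (Fin 2 × ZMod n)),
          (ℓ v : ℕ) = 4 * n + 2) := by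
  obtain ⟨m, hm⟩ := heven
  have h2m : n = 2 * m := by omega
  haveI : Fact (1 < n) := ⟨by omega⟩
  have hval : ∀ i : ZMod n, i.val < n := fun i => ZMod.val_lt i
  have hmem : ∀ p : Fin 2 × ZMod n, Fnat n p.1.val p.2.val ∈ Finset.Icc 1 (2*n) := by
    rintro ⟨b, i⟩
    have := hval i
    have hb := b.isLt
    simp only [Fnat, Finset.mem_Icc]
    split_ifs <;> omega
  set g : Fin 2 × ZMod n → (Finset.Icc 1 (2*n) : Finset ℕ) :=
    fun p => ⟨Fnat n p.1.val p.2.val, hmem p⟩ with hg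
  have hinj : Function.Injective g := by
    rintro ⟨b, i⟩ ⟨b', i'⟩ h
    have h' : Fnat n b.val i.val = Fnat n b'.val i'.val := congrArg Subtype.val h
    have h1 := hval i; have h2 := hval i'
    have hb := b.isLt; have hb' := b'.isLt
    have key : b.val = b'.val ∧ i.val = i'.val := by
      unfold Fnat at h'
      split_ifs at h' <;> omega
    exact Prod.ext (Fin.ext key.1) (ZMod.val_injective n key.2)
  have hcard : Fintype.card (Fin 2 × ZMod n)
      = Fintype.card ((Finset.Icc 1 (2*n) : Finset ℕ) : Type) := by
    simp [ZMod.card, Fintype.card_coe, Nat.card_Icc]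
  have hbij : Function.Bijective g :=
    (Fintype.bijective_iff_injective_and_card g).mpr ⟨hinj, hcard⟩
  refine ⟨Equiv.ofBijective g hbij, ?_, ?_⟩
  · intro b
    have hb := b.isLt
    calc ∑ i : ZMod n, ((Equiv.ofBijective g hbij) (b, i) : ℕ)
        = ∑ i : ZMod n, Fnat n b.val i.val := rfl
      _ = ∑ k ∈ Finset.range n, Fnat n b.val k := sum_zmod n _
      _ = ∑ j ∈ Finset.range m, (Fnat n b.val (2*j) + Fnat n b.val (2*j+1)) := by
          rw [show Finset.range n = Finset.range (2*m) from by rw [h2m]]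
          exact sum_two_mul m _
      _ = ∑ _j ∈ Finset.range m, (2*n+1) := by
          refine Finset.sum_congr rfl fun j hj => ?_
          have := Finset.mem_range.mp hj
          unfold Fnat
          split_ifs <;> omega
      _ = m * (2*n+1) := by rw [Finset.sum_const, smul_eq_mul, Finset.card_range]
      _ = n * (2 * n + 1) / 2 := by
          rw [h2m, mul_assoc, Nat.mul_div_cancel_left _ two_pos]
  · intro i
    have hne : i ≠ i + 1 := by simp [left_eq_add]
    have hsum : ∑ v ∈ ({(0, i), (1, i), (0, i + 1), (1, i + 1)} : Finset (Fin 2 × ZMod n)),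
        ((Equiv.ofBijective g hbij) v : ℕ)
        = Fnat n 0 i.val + (Fnat n 1 i.val + (Fnat n 0 (i+1).val + Fnat n 1 (i+1).val)) := by
      rw [Finset.sum_insert (by simp [Prod.ext_iff, hne]),
        Finset.sum_insert (by simp [Prod.ext_iff, hne]),
        Finset.sum_insert (by simp [Prod.ext_iff]), Finset.sum_singleton]
      rfl
    have hv1 : (i+1).val = (i.val + 1) % n := by
      rw [ZMod.val_add, ZMod.val_one]
    have hp : (i+1).val % 2 = (i.val + 1) % 2 := by
      rw [hv1, Nat.mod_mod_of_dvd _ ⟨m, h2m⟩]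
    have h1 := hval i
    have h2 := hval (i+1)
    rw [hsum]
    unfold Fnat
    norm_num
    split_ifs <;> omega
end
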